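/- Let r_c = exp(-π/√3). For every real r with r > r_c there exists a unique β in the open interval (-5/6, 0) satisfying the transcendental equation -3β·log(r) + log(2·sin(π(1/6 - β))) = 0. Moreover, when r = 1 this unique solution is β = -2/3. -/

import Mathlib

open Real Set Filter Topology

noncomputable def Nfun (β : ℝ) : ℝ := Real.log (2 * Real.sin (Real.pi * (1/6 - β)))

lemma sin_pos_of_mem {β : ℝ} (h : β ∈ Set.Ioo (-(5:ℝ)/6) (1/6)) :
    0 < Real.sin (Real.pi * (1/6 - β)) := by
  apply Real.sin_pos_of_pos_of_lt_pi
  · nlinarith [Real.pi_pos, h.2]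
  · nlinarith [Real.pi_pos, h.1]

lemma hasDerivAt_theta (β : ℝ) :
    HasDerivAt (fun b : ℝ => Real.pi * (1/6 - b)) (-Real.pi) β := by
  simpa using ((hasDerivAt_id β).const_sub (1/6:ℝ)).const_mul Real.pi

lemma hasDerivAt_N {β : ℝ} (h : β ∈ Set.Ioo (-(5:ℝ)/6) (1/6)) :
    HasDerivAt Nfun
      (-Real.pi * Real.cos (Real.pi * (1/6 - β)) / Real.sin (Real.pi * (1/6 - β))) β := by
  have hpos := sin_pos_of_mem h
  have hs : HasDerivAt (fun b : ℝ => 2 * Real.sin (Real.pi * (1/6 - b)))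
      (2 * (Real.cos (Real.pi * (1/6 - β)) * -Real.pi)) β :=
    ((Real.hasDerivAt_sin _).comp β (hasDerivAt_theta β)).const_mul 2
  have hne : 2 * Real.sin (Real.pi * (1/6 - β)) ≠ 0 := by positivity
  have := hs.log hne
  refine this.congr_deriv (Eq.symm ?_)
  field_simp

noncomputable def N1 (β : ℝ) : ℝ :=
  -Real.pi * Real.cos (Real.pi * (1/6 - β)) / Real.sin (Real.pi * (1/6 - β))

lemma hasDerivAt_N1 {β : ℝ} (h : β ∈ Set.Ioo (-(5:ℝ)/6) (1/6)) :
    HasDerivAt N1 (-Real.pi ^ 2 / (Real.sin (Real.pi * (1/6 - β))) ^ 2) β := by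
  have hpos := sin_pos_of_mem h
  have hc : HasDerivAt (fun b : ℝ => -Real.pi * Real.cos (Real.pi * (1/6 - b)))
      (-Real.pi * (-Real.sin (Real.pi * (1/6 - β)) * -Real.pi)) β :=
    ((Real.hasDerivAt_cos _).comp β (hasDerivAt_theta β)).const_mul (-Real.pi)
  have hs : HasDerivAt (fun b : ℝ => Real.sin (Real.pi * (1/6 - b)))
      (Real.cos (Real.pi * (1/6 - β)) * -Real.pi) β :=
    (Real.hasDerivAt_sin _).comp β (hasDerivAt_theta β)
  have := hc.div hs (ne_of_gt hpos)
  refine this.congr_deriv (Eq.symm ?_)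
  have hpy := Real.sin_sq_add_cos_sq (Real.pi * (1/6 - β))
  rw [div_eq_div_iff (by positivity) (by positivity)]
  linear_combination (Real.pi ^ 2 * Real.sin (Real.pi * (1/6 - β)) ^ 2) * hpy

lemma N_strictConcave : StrictConcaveOn ℝ (Set.Ioo (-(5:ℝ)/6) (1/6)) Nfun := by
  apply strictConcaveOn_of_deriv2_neg (convex_Ioo _ _)
  · intro x hx
    exact (hasDerivAt_N hx).continuousAt.continuousWithinAt
  · intro x hx
    rw [interior_Ioo] at hx
    have h1 : deriv Nfun =ᶠ[𝓝 x] N1 := by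
      filter_upwards [isOpen_Ioo.mem_nhds hx] with y hy
      exact (hasDerivAt_N hy).deriv
    have h2 : deriv (deriv Nfun) x = deriv N1 x := h1.deriv_eq
    have h3 : deriv N1 x = -Real.pi ^ 2 / (Real.sin (Real.pi * (1/6 - x))) ^ 2 :=
      (hasDerivAt_N1 hx).deriv
    have hpos := sin_pos_of_mem hx
    simp only [Function.iterate_succ, Function.iterate_zero, Function.comp_apply, id_eq]
    rw [h2, h3]
    have : 0 < (Real.sin (Real.pi * (1/6 - x))) ^ 2 := by positivity
    have hπ := Real.pi_pos
    apply div_neg_of_neg_of_pos _ this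
    nlinarith

lemma N_zero : Nfun 0 = 0 := by
  have h : Real.pi * (1/6 - 0) = Real.pi / 6 := by ring
  rw [Nfun, h, Real.sin_pi_div_six]
  norm_num

lemma uniq_root {L β₁ β₂ : ℝ} (h₁ : β₁ ∈ Set.Ioo (-(5:ℝ)/6) 0) (h₂ : β₂ ∈ Set.Ioo (-(5:ℝ)/6) 0)
    (e₁ : Nfun β₁ = 3 * β₁ * L) (e₂ : Nfun β₂ = 3 * β₂ * L) : β₁ = β₂ := by
  by_contra hne
  wlog hlt : β₁ < β₂ generalizing β₁ β₂
  · exact this h₂ h₁ e₂ e₁ (Ne.symm hne) (lt_of_le_of_ne (not_lt.1 hlt) (Ne.symm hne))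
  set t := β₂ / β₁ with ht_def
  have hβ₁ne : β₁ ≠ 0 := ne_of_lt h₁.2
  have ht0 : 0 < t := div_pos_iff.2 (Or.inr ⟨h₂.2, h₁.2⟩)
  have htβ : t * β₁ = β₂ := div_mul_cancel₀ _ hβ₁ne
  have ht1 : t < 1 := by nlinarith [h₁.2]
  have hmem₁ : β₁ ∈ Set.Ioo (-(5:ℝ)/6) (1/6) := ⟨h₁.1, lt_trans h₁.2 (by norm_num)⟩
  have hmem0 : (0:ℝ) ∈ Set.Ioo (-(5:ℝ)/6) (1/6) := by norm_num
  have hkey := N_strictConcave.2 hmem₁ hmem0 hβ₁ne ht0 (by linarith : (0:ℝ) < 1 - t)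
    (by ring : t + (1 - t) = 1)
  simp only [smul_eq_mul, mul_zero, add_zero, N_zero] at hkey
  rw [htβ, e₁, e₂] at hkey
  have hEq : t * (3 * β₁ * L) = 3 * β₂ * L := by rw [← htβ]; ring
  linarith [hkey, hEq.ge, hEq.le]

lemma sin_half_unique {θ : ℝ} (h1 : Real.pi / 6 < θ) (h2 : θ < Real.pi)
    (hs : Real.sin θ = 1/2) : θ = 5 * Real.pi / 6 := by
  have hπ := Real.pi_pos
  rcases le_or_gt θ (Real.pi / 2) with hle | hgt
  · exfalso
    have := Real.strictMonoOn_sin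
      (⟨by linarith, by linarith⟩ : Real.pi / 6 ∈ Set.Icc (-(Real.pi/2)) (Real.pi/2))
      (⟨by linarith, hle⟩ : θ ∈ Set.Icc (-(Real.pi/2)) (Real.pi/2)) h1
    rw [Real.sin_pi_div_six, hs] at this
    linarith
  · have h5 : Real.sin (Real.pi - θ) = 1/2 := by rw [Real.sin_pi_sub]; exact hs
    have := Real.injOn_sin
      (⟨by linarith, by linarith⟩ : Real.pi - θ ∈ Set.Icc (-(Real.pi/2)) (Real.pi/2))
      (⟨by linarith, by linarith⟩ : Real.pi / 6 ∈ Set.Icc (-(Real.pi/2)) (Real.pi/2))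
      (by rw [h5, Real.sin_pi_div_six])
    linarith

theorem exists_unique_beta_supercritical :
    (∀ r : ℝ, r > Real.exp (-Real.pi / Real.sqrt 3) →
      ∃! β : ℝ, β ∈ Set.Ioo (-(5:ℝ)/6) 0 ∧
        -3 * β * Real.log r + Real.log (2 * Real.sin (Real.pi * (1/6 - β))) = 0) ∧
    (∀ β : ℝ, β ∈ Set.Ioo (-(5:ℝ)/6) 0 →
      -3 * β * Real.log 1 + Real.log (2 * Real.sin (Real.pi * (1/6 - β))) = 0 →
      β = -2/3) := by
  constructor
  · intro r hr
    set L := Real.log r with hLdef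
    have hrpos : 0 < r := lt_trans (Real.exp_pos _) hr
    have hL : -Real.pi / Real.sqrt 3 < L := (Real.lt_log_iff_exp_lt hrpos).2 hr
    have hs3 : Real.sqrt 3 * Real.sqrt 3 = 3 := Real.mul_self_sqrt (by norm_num)
    have hs : 0 < Real.sqrt 3 := Real.sqrt_pos.2 (by norm_num)
    have hL' : -(Real.sqrt 3 * Real.pi) < 3 * L := by
      have key : 0 < Real.sqrt 3 * (L - -Real.pi / Real.sqrt 3) := mul_pos hs (by linarith)
      have h1 : Real.sqrt 3 * (Real.pi / Real.sqrt 3) = Real.pi := by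
        field_simp
      have k1 : 0 < Real.sqrt 3 * L + Real.pi := by
        have : Real.sqrt 3 * (L - -Real.pi / Real.sqrt 3)
            = Real.sqrt 3 * L + Real.sqrt 3 * (Real.pi / Real.sqrt 3) := by ring
        rw [this, h1] at key; linarith
      have expand : Real.sqrt 3 * (Real.sqrt 3 * L + Real.pi)
          = 3 * L + Real.sqrt 3 * Real.pi := by rw [mul_add, ← mul_assoc, hs3]
      have := mul_pos hs k1
      rw [expand] at this
      linarith
    -- point b near 0 with f b > 0
    have hmem0 : (0:ℝ) ∈ Set.Ioo (-(5:ℝ)/6) (1/6) := by norm_num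
    have hderiv0 : HasDerivAt Nfun (-(Real.sqrt 3 * Real.pi)) 0 := by
      have h := hasDerivAt_N hmem0
      convert h using 1
      rw [show Real.pi * (1/6 - 0) = Real.pi / 6 by ring, Real.cos_pi_div_six,
        Real.sin_pi_div_six]
      field_simp
    have hslope : Tendsto (slope Nfun 0) (𝓝[<] 0) (𝓝 (-(Real.sqrt 3 * Real.pi))) :=
      (hasDerivAt_iff_tendsto_slope.1 hderiv0).mono_left
        (nhdsWithin_mono _ fun x hx => ne_of_lt hx)
    have hev : ∀ᶠ β in 𝓝[<] (0:ℝ), slope Nfun 0 β < 3 * L :=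
      hslope.eventually_lt_const hL'
    have hIoo : Set.Ioo (-(5:ℝ)/6) 0 ∈ 𝓝[<] (0:ℝ) :=
      Ioo_mem_nhdsLT_of_mem (by norm_num : (0:ℝ) ∈ Set.Ioc (-(5:ℝ)/6) 0)
    obtain ⟨b, hb1, hb2⟩ := (hev.and (eventually_of_mem hIoo fun _ h => h)).exists
    have hbslope : Nfun b / b < 3 * L := by
      have : slope Nfun 0 b = Nfun b / b := by
        rw [slope_def_field, N_zero]; ring_nf
      rwa [this] at hb1
    have hfb : 0 < -3 * b * L + Nfun b := by
      have := (div_lt_iff_of_neg hb2.2).1 hbslope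
      linarith
    -- point a near -5/6 with f a < 0
    have hsin_tendsto : Tendsto (fun β : ℝ => 2 * Real.sin (Real.pi * (1/6 - β)))
        (𝓝[>] (-(5:ℝ)/6)) (𝓝[>] 0) := by
      rw [tendsto_nhdsWithin_iff]
      constructor
      · have hc : Continuous fun β : ℝ => 2 * Real.sin (Real.pi * (1/6 - β)) := by fun_prop
        have h0 : 2 * Real.sin (Real.pi * (1/6 - (-(5:ℝ)/6))) = 0 := by
          rw [show Real.pi * (1/6 - (-(5:ℝ)/6)) = Real.pi by ring, Real.sin_pi]; ring
        have := (hc.tendsto (-(5:ℝ)/6)).mono_left (nhdsWithin_le_nhds (s := Set.Ioi (-(5:ℝ)/6)))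
        rwa [h0] at this
      · filter_upwards [Ioo_mem_nhdsGT_of_mem
          (⟨le_refl _, by norm_num⟩ : -(5:ℝ)/6 ∈ Set.Ico (-(5:ℝ)/6) (1/6))] with β hβ
        exact mul_pos two_pos (sin_pos_of_mem hβ)
    have hNbot : Tendsto Nfun (𝓝[>] (-(5:ℝ)/6)) atBot :=
      Real.tendsto_log_nhdsGT_zero.comp hsin_tendsto
    have hlin : Tendsto (fun β : ℝ => -3 * β * L) (𝓝[>] (-(5:ℝ)/6))
        (𝓝 (-3 * (-(5:ℝ)/6) * L)) := by
      have : Continuous fun β : ℝ => -3 * β * L := by fun_prop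
      exact (this.tendsto _).mono_left nhdsWithin_le_nhds
    have hfbot : Tendsto (fun β : ℝ => -3 * β * L + Nfun β) (𝓝[>] (-(5:ℝ)/6)) atBot :=
      hlin.add_atBot hNbot
    have hevneg : ∀ᶠ β in 𝓝[>] (-(5:ℝ)/6), -3 * β * L + Nfun β < 0 :=
      hfbot.eventually (eventually_lt_atBot 0)
    have hIoo2 : Set.Ioo (-(5:ℝ)/6) b ∈ 𝓝[>] (-(5:ℝ)/6) :=
      Ioo_mem_nhdsGT_of_mem ⟨le_refl _, hb2.1⟩
    obtain ⟨a, ha1, ha2⟩ := (hevneg.and (eventually_of_mem hIoo2 fun _ h => h)).exists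
    -- IVT
    have hab : a < b := ha2.2
    have hsub : Set.Icc a b ⊆ Set.Ioo (-(5:ℝ)/6) 0 := fun x hx =>
      ⟨lt_of_lt_of_le ha2.1 hx.1, lt_of_le_of_lt hx.2 hb2.2⟩
    have hcont : ContinuousOn (fun β : ℝ => -3 * β * L + Nfun β) (Set.Icc a b) := by
      intro x hx
      have hx' := hsub hx
      have hmx : x ∈ Set.Ioo (-(5:ℝ)/6) (1/6) := ⟨hx'.1, lt_trans hx'.2 (by norm_num)⟩
      have hc1 : Continuous fun β : ℝ => -3 * β * L := by fun_prop
      exact (hc1.continuousAt.add (hasDerivAt_N hmx).continuousAt).continuousWithinAt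
    have h0mem : (0:ℝ) ∈ Set.Ioo (-3 * a * L + Nfun a) (-3 * b * L + Nfun b) :=
      ⟨ha1, hfb⟩
    obtain ⟨c, hc, hfc⟩ := intermediate_value_Ioo (le_of_lt hab) hcont h0mem
    have hcmem : c ∈ Set.Ioo (-(5:ℝ)/6) 0 :=
      ⟨lt_trans ha2.1 hc.1, lt_trans hc.2 hb2.2⟩
    refine ⟨c, ⟨hcmem, hfc⟩, ?_⟩
    intro y hy
    have hfc' : -3 * c * L + Nfun c = 0 := hfc
    exact uniq_root (L := L) hy.1 hcmem
      (by have := hy.2; unfold Nfun; linarith)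
      (by unfold Nfun at hfc' ⊢; linarith)
  · intro β hβ heq
    rw [Real.log_one] at heq
    have hπ := Real.pi_pos
    have hmem : β ∈ Set.Ioo (-(5:ℝ)/6) (1/6) := ⟨hβ.1, lt_trans hβ.2 (by norm_num)⟩
    have hpos := sin_pos_of_mem hmem
    have h2 : Real.log (2 * Real.sin (Real.pi * (1/6 - β))) = 0 := by linarith
    have h1 : 2 * Real.sin (Real.pi * (1/6 - β)) = 1 := by
      rcases Real.log_eq_zero.1 h2 with h | h | h
      · linarith
      · exact h
      · linarith
    have hsin : Real.sin (Real.pi * (1/6 - β)) = 1/2 := by linarith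
    have hθ1 : Real.pi / 6 < Real.pi * (1/6 - β) := by nlinarith [hβ.2]
    have hθ2 : Real.pi * (1/6 - β) < Real.pi := by nlinarith [hβ.1]
    have hθ := sin_half_unique hθ1 hθ2 hsin
    have h56 : Real.pi * (1/6 - β) = Real.pi * (5/6) := by linarith
    have := mul_left_cancel₀ Real.pi_ne_zero h56
    linarith
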